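/- Let 𝔾 be a universally measurable partial concept class on a Polish space X with 1 ≤ d := VC(𝔾) < ∞, let P be a probability distribution on X × {0,1} that is Bayes-realizable with respect to 𝔾, and let (X_1,Y_1),…,(X_n,Y_n) be i.i.d. P. For any n, m ∈ ℕ with n ≥ m and any δ ∈ (0,1), with conditional probability at least 1 − δ given the unordered multiset {X_1,…,X_n} (equivalently, given the empirical measure (1/n)·Σ_{i≤n} δ_{X_i}), every g ∈ 𝔾(X_1,…,X_n) satisfies er̄_n(g) − er̄_n(h*_P) ≤ 2·(er̄_m(g) − er̄_m(h*_P)) + (24/m)·( d·log(n/d) + log(1/δ) ) and er̄_m(g) − er̄_m(h*_P) ≤ 2·(er̄_n(g) − er̄_n(h*_P)) + (24/m)·( d·log(n/d) + log(1/δ) ), and every f, g ∈ 𝔾(X_1,…,X_n) satisfy P_n(f ≠ g) ≤ 2·P_m(f ≠ g) + (24/m)·( d·log(n/d) + log(1/δ) ) and P_m(f ≠ g) ≤ 2·P_n(f ≠ g) + (24/m)·( d·log(n/d) + log(1/δ) ). -/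

import Mathlib

set_option maxHeartbeats 1000000


open MeasureTheory Filter
open scoped ENNReal

namespace Agn

section Basic

variable {X : Type*} [MeasurableSpace X]

/-- A set is universally measurable: null-measurable w.r.t. every probability measure. -/
def UnivMeasurableSet {α : Type*} [MeasurableSpace α] (s : Set α) : Prop :=
  ∀ μ : Measure α, IsProbabilityMeasure μ → NullMeasurableSet s μ

/-- A function is universally measurable. -/
def UnivMeasurable {α β : Type*} [MeasurableSpace α] [MeasurableSpace β] (f : α → β) : Prop :=
  ∀ μ : Measure α, IsProbabilityMeasure μ → NullMeasurable f μ

/-- Error rate of a classifier under `P`. -/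
noncomputable def er (P : Measure (X × Bool)) (h : X → Bool) : ℝ :=
  (P {p | h p.1 ≠ p.2}).toReal

/-- The best error rate achievable by the class `H`. -/
noncomputable def optErr (P : Measure (X × Bool)) (H : Set (X → Bool)) : ℝ :=
  sInf ((fun h => er P h) '' H)

/-- The i.i.d. sample measure `P^n`. -/
noncomputable def sampleMeasure (P : Measure (X × Bool)) (n : ℕ) :
    Measure (Fin n → X × Bool) :=
  Measure.pi fun _ => P

end Basic

/-- A (candidate) learning algorithm: a function of the sample and the test point. -/
abbrev Alg (X : Type*) := (n : ℕ) → (Fin n → X × Bool) → X → Bool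

section Learn

variable {X : Type*} [MeasurableSpace X]

/-- A learning algorithm: a sequence of universally measurable functions. -/
def IsLearningAlg (f : Alg X) : Prop :=
  ∀ n : ℕ, UnivMeasurable fun p : (Fin n → X × Bool) × X => f n p.1 p.2

/-- Expected error rate of the classifier returned from an i.i.d. sample of size `n`. -/
noncomputable def expErr (P : Measure (X × Bool)) (f : Alg X) (n : ℕ) : ℝ :=
  ∫ S, er P (f n S) ∂ sampleMeasure P n

/-- Expected excess error rate. -/
noncomputable def excess (P : Measure (X × Bool)) (H : Set (X → Bool)) (f : Alg X)
    (n : ℕ) : ℝ :=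
  expErr P f n - optErr P H

/-- `H` is agnostically learnable at rate `R`. -/
def LearnableAtRate (H : Set (X → Bool)) (R : ℕ → ℝ) : Prop :=
  ∃ f : Alg X, IsLearningAlg f ∧
    ∀ P : Measure (X × Bool), IsProbabilityMeasure P →
      ∃ C > (0 : ℝ), ∃ c > (0 : ℝ), ∀ n : ℕ, excess P H f n ≤ C * R ⌈c * (n : ℝ)⌉₊

/-- `H` is not agnostically learnable faster than `R`. -/
def NotLearnableFasterThan (H : Set (X → Bool)) (R : ℕ → ℝ) : Prop :=
  ∃ C > (0 : ℝ), ∃ c > (0 : ℝ), ∀ f : Alg X, IsLearningAlg f →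
    ∃ P : Measure (X × Bool), IsProbabilityMeasure P ∧
      ∃ᶠ n : ℕ in atTop, C * R ⌈c * (n : ℝ)⌉₊ ≤ excess P H f n

/-- `H` is agnostically learnable with optimal rate exactly `e^{-o(n)}`. -/
def OptimalRateNearExp (H : Set (X → Bool)) : Prop :=
  (∀ ψ : ℕ → ℝ, (∀ n, 0 ≤ ψ n) →
      Tendsto (fun n : ℕ => ψ n / (n : ℝ)) atTop (nhds 0) →
      LearnableAtRate H fun n => Real.exp (-ψ n)) ∧
  ∀ f : Alg X, IsLearningAlg f →
    ∃ ψ : ℕ → ℝ, (∀ n, 0 ≤ ψ n) ∧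
      Tendsto (fun n : ℕ => ψ n / (n : ℝ)) atTop (nhds 0) ∧
      ∃ P : Measure (X × Bool), IsProbabilityMeasure P ∧
        ∃ᶠ n in atTop, Real.exp (-ψ n) ≤ excess P H f n

/-- `H` is agnostically learnable with optimal rate exactly `o(n^{-1/2})`. -/
def OptimalRateSuperRoot (H : Set (X → Bool)) : Prop :=
  (∃ f : Alg X, IsLearningAlg f ∧
      ∀ P : Measure (X × Bool), IsProbabilityMeasure P →
        Tendsto (fun n : ℕ => Real.sqrt (n : ℝ) * excess P H f n) atTop (nhds 0)) ∧
  ∀ R : ℕ → ℝ, (∀ n, 0 < R n) →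
    Tendsto (fun n : ℕ => Real.sqrt (n : ℝ) * R n) atTop (nhds 0) →
    ¬ LearnableAtRate H R

/-- `H` requires arbitrarily slow rates for agnostic learning. -/
def RequiresArbitrarilySlowRates (H : Set (X → Bool)) : Prop :=
  (∃ f : Alg X, IsLearningAlg f ∧
      ∀ P : Measure (X × Bool), IsProbabilityMeasure P →
        Filter.limsup (fun n : ℕ => excess P H f n) atTop ≤ 0) ∧
  ∀ R : ℕ → ℝ, (∀ n, 0 < R n) → Tendsto R atTop (nhds 0) →
    NotLearnableFasterThan H R

end Learn

/-- A witness of the image admissible Suslin property. -/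
structure SuslinWitness (X : Type*) [MeasurableSpace X] (H : Set (X → Bool)) where
  Θ : Type
  topΘ : TopologicalSpace Θ
  measΘ : MeasurableSpace Θ
  polish : @PolishSpace Θ topΘ
  borel : @BorelSpace Θ topΘ measΘ
  F : Θ × X → Bool
  measF : @Measurable (Θ × X) Bool (@Prod.instMeasurableSpace Θ X measΘ _) _ F
  range_eq : H = {g | ∃ θ : Θ, g = fun x => F (θ, x)}

/-- The image admissible Suslin property. -/
def ImageAdmissibleSuslin (X : Type*) [MeasurableSpace X] (H : Set (X → Bool)) : Prop :=
  Nonempty (SuslinWitness X H)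

section Trees

variable {X : Type*}

/-- `H` shatters an infinite Littlestone tree. -/
def ShattersInfLittlestoneTree (H : Set (X → Bool)) : Prop :=
  ∃ t : List Bool → X, ∀ y : ℕ → Bool, ∀ n : ℕ, ∃ h ∈ H,
    ∀ k ≤ n, h (t (List.ofFn fun i : Fin k => y i)) = y k

/-- `H` shatters an infinite VCL tree. -/
def ShattersInfVCLTree (H : Set (X → Bool)) : Prop :=
  ∃ t : (k : ℕ) → ((j : Fin k) → Fin (j.1 + 1) → Bool) → Fin (k + 1) → X,
    ∀ y : (k : ℕ) → Fin (k + 1) → Bool, ∀ n : ℕ, ∃ h ∈ H,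
      ∀ k ≤ n, ∀ i : Fin (k + 1), h (t k (fun j => y j.1) i) = y k i

/-- `H` (VC-)shatters some set of `n` points. -/
def Shatters (H : Set (X → Bool)) (n : ℕ) : Prop :=
  ∃ x : Fin n → X, ∀ y : Fin n → Bool, ∃ h ∈ H, ∀ i, h (x i) = y i

end Trees

/-- `log x := ln (max x e)`, the truncated logarithm used throughout. -/
noncomputable def clog (x : ℝ) : ℝ := Real.log (max x (Real.exp 1))

/-- `ε²(n,δ) = (1/n)(d log(n/d) + log(1/δ))`. -/
noncomputable def epsSq (d n : ℕ) (δ : ℝ) : ℝ :=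
  (1 / (n : ℝ)) * ((d : ℝ) * clog ((n : ℝ) / (d : ℝ)) + clog (1 / δ))

section Emp

variable {X : Type*}

/-- Empirical risk on a sample. -/
noncomputable def empErr {n : ℕ} (S : Fin n → X × Bool) (h : X → Bool) : ℝ :=
  (1 / (n : ℝ)) * ∑ i, if h (S i).1 = (S i).2 then 0 else 1

/-- Empirical distance between two classifiers on a sample. -/
noncomputable def empDist {n : ℕ} (S : Fin n → X × Bool) (f g : X → Bool) : ℝ :=
  (1 / (n : ℝ)) * ∑ i, if f (S i).1 = g (S i).1 then 0 else 1

end Emp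

section Mix

variable {X : Type*} [MeasurableSpace X]

/-- The uniform mixture `P̄ = (1/n) ∑ Pᵢ`. -/
noncomputable def mixMeasure {n : ℕ} (P : Fin n → Measure (X × Bool)) : Measure (X × Bool) :=
  (n : ℝ≥0∞)⁻¹ • ∑ i, P i

/-- Population distance `Q({(x,y) : f x ≠ g x})`. -/
noncomputable def popDist (Q : Measure (X × Bool)) (f g : X → Bool) : ℝ :=
  (Q {p | f p.1 ≠ g p.1}).toReal

end Mix

section Partial

variable {X : Type*} [MeasurableSpace X]

/-- Realizable binary classifications of a finite sample by a partial concept class. -/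
def pproj (G : Set (X → Option Bool)) {n : ℕ} (x : Fin n → X) : Set (Fin n → Bool) :=
  {b | ∃ g ∈ G, ∀ i, g (x i) = some (b i)}

/-- The partial class `G` shatters some `n` points. -/
def PShatters (G : Set (X → Option Bool)) (n : ℕ) : Prop :=
  ∃ x : Fin n → X, pproj G x = Set.univ

/-- Universal measurability of a partial concept class. -/
def PUnivMeasurable (G : Set (X → Option Bool)) : Prop :=
  ∀ (n : ℕ) (b : Fin n → Bool), UnivMeasurableSet {x : Fin n → X | b ∈ pproj G x}

/-- The conditional probability `P(Y = y | X = x)` determined by `η`. -/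
noncomputable def condProb (η : X → ℝ) (x : X) (y : Bool) : ℝ :=
  if y then η x else 1 - η x

/-- The Bayes classifier determined by `η`. -/
noncomputable def bayes (η : X → ℝ) : X → Bool := fun x => decide ((1 / 2 : ℝ) ≤ η x)

/-- The marginal distribution of `P` on `X`. -/
noncomputable def marginalX (P : Measure (X × Bool)) : Measure X := P.map Prod.fst

/-- `η` is a (Borel) version of `P(Y = 1 | X = ·)` with values in `[0,1]`. -/
def IsCondDist (P : Measure (X × Bool)) (η : X → ℝ) : Prop :=
  Measurable η ∧ (∀ x, 0 ≤ η x ∧ η x ≤ 1) ∧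
    ∀ s : Set X, MeasurableSet s →
      P (s ×ˢ ({true} : Set Bool)) = ∫⁻ x in s, ENNReal.ofReal (η x) ∂ marginalX P

/-- `P` is Bayes-realizable with respect to the partial concept class `G`. -/
def BayesRealizable (G : Set (X → Option Bool)) (P : Measure (X × Bool)) (η : X → ℝ) : Prop :=
  ∀ n : ℕ, ∀ᵐ x ∂ (Measure.pi fun _ : Fin n => marginalX P),
    ∃ b ∈ pproj G x, ∀ i, (1 / 2 : ℝ) ≤ condProb η (x i) (b i)

end Partial

/-- The Bernoulli measure on `Bool` with success probability `p`. -/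
noncomputable def bern (p : ℝ) : Measure Bool :=
  ENNReal.ofReal p • Measure.dirac true + ENNReal.ofReal (1 - p) • Measure.dirac false

section Labels

variable {X : Type*} [MeasurableSpace X]

/-- The conditional law of the labels given the instances. -/
noncomputable def labelLaw (η : X → ℝ) {n : ℕ} (x : Fin n → X) : Measure (Fin n → Bool) :=
  Measure.pi fun i => bern (η (x i))

end Labels

section FinLab

variable {X : Type*}

/-- Empirical risk of a labeling `f` against realized labels `y`. -/
noncomputable def empErrLab {n : ℕ} (y f : Fin n → Bool) : ℝ :=
  (1 / (n : ℝ)) * ∑ i, if f i = y i then 0 else 1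

/-- Hamming distance (normalized) between two labelings. -/
noncomputable def distLab {n : ℕ} (f g : Fin n → Bool) : ℝ :=
  (1 / (n : ℝ)) * ∑ i, if f i = g i then 0 else 1

/-- Semi-empirical error of a labeling on the length-`t` prefix. -/
noncomputable def semiErrFin (η : X → ℝ) {n : ℕ} (x : Fin n → X) (t : ℕ)
    (f : Fin n → Bool) : ℝ :=
  (1 / (t : ℝ)) * ∑ i : Fin n, if i.1 < t then 1 - condProb η (x i) (f i) else 0

/-- Semi-empirical Bayes error on the length-`t` prefix. -/
noncomputable def semiErrBayesFin (η : X → ℝ) {n : ℕ} (x : Fin n → X) (t : ℕ) : ℝ :=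
  (1 / (t : ℝ)) * ∑ i : Fin n, if i.1 < t then min (η (x i)) (1 - η (x i)) else 0

/-- Normalized disagreement between labelings on the length-`t` prefix. -/
noncomputable def distFin {n : ℕ} (t : ℕ) (f g : Fin n → Bool) : ℝ :=
  (1 / (t : ℝ)) * ∑ i : Fin n, if i.1 < t ∧ f i ≠ g i then 1 else 0

end FinLab

section Seq

variable {X : Type*}

/-- The labeling `g` of the first `n` points is realizable by `G`. -/
def memProj (G : Set (X → Option Bool)) (x : ℕ → X) (n : ℕ) (g : ℕ → Bool) : Prop :=
  ∃ g' ∈ G, ∀ i < n, g' (x i) = some (g i)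

/-- Semi-empirical error of a labeling on the first `t` points. -/
noncomputable def semiErrSeq (η : X → ℝ) (x : ℕ → X) (t : ℕ) (g : ℕ → Bool) : ℝ :=
  (1 / (t : ℝ)) * ∑ i ∈ Finset.range t, (1 - condProb η (x i) (g i))

/-- Semi-empirical Bayes error on the first `t` points. -/
noncomputable def semiErrBayesSeq (η : X → ℝ) (x : ℕ → X) (t : ℕ) : ℝ :=
  (1 / (t : ℝ)) * ∑ i ∈ Finset.range t, min (η (x i)) (1 - η (x i))

/-- Normalized disagreement between two labelings on the first `t` points. -/
noncomputable def distSeq (t : ℕ) (f g : ℕ → Bool) : ℝ :=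
  (1 / (t : ℝ)) * ∑ i ∈ Finset.range t, if f i = g i then 0 else 1

/-- Projection of the `ε`-near-optimal realizable labelings of the first `t` points
to the first `m` coordinates. -/
def projGood (G : Set (X → Option Bool)) (η : X → ℝ) (x : ℕ → X) (ε : ℝ) (t m : ℕ) :
    Set (Fin m → Bool) :=
  {b | ∃ g : ℕ → Bool, memProj G x t g ∧
    semiErrSeq η x t g - semiErrBayesSeq η x t ≤ ε ∧ ∀ j : Fin m, b j = g (j : ℕ)}

end Seq

/-- `Z` is an i.i.d. sequence with common law `P` on the probability space `(Ω, μ)`. -/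
def IsIIDSeq {Ω : Type*} [MeasurableSpace Ω] (μ : Measure Ω) {Y : Type*} [MeasurableSpace Y]
    (P : Measure Y) (Z : ℕ → Ω → Y) : Prop :=
  (∀ i, Measurable (Z i)) ∧
    ∀ n : ℕ, μ.map (fun ω => fun i : Fin n => Z (i : ℕ) ω) = Measure.pi fun _ : Fin n => P

section UGCsec

variable {X : Type*} [MeasurableSpace X]

/-- The uniform deviation of empirical frequencies over the class `H`. -/
noncomputable def ugcDev (H : Set (X → Bool)) (Q : Measure X) {n : ℕ} (x : Fin n → X) : ℝ :=
  sSup ((fun h => |(1 / (n : ℝ)) * (∑ i, if h (x i) = true then (1 : ℝ) else 0) -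
      (Q {z | h z = true}).toReal|) '' H)

/-- The universal Glivenko–Cantelli property. -/
def UGC (H : Set (X → Bool)) : Prop :=
  ∀ Q : Measure X, IsProbabilityMeasure Q →
    Tendsto (fun n : ℕ => ∫ x, ugcDev H Q x ∂ (Measure.pi fun _ : Fin n => Q)) atTop (nhds 0)

/-- `H` is totally bounded in `L₁(Q)`. -/
def TotallyBoundedL1 (H : Set (X → Bool)) (Q : Measure X) : Prop :=
  ∀ ε : ℝ, 0 < ε → ∃ H' : Set (X → Bool), H' ⊆ H ∧ H'.Finite ∧
    ∀ h ∈ H, ∃ h' ∈ H', (Q {x | h' x ≠ h x}).toReal ≤ ε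

end UGCsec

open scoped Classical

section AgnAux

open Finset

/-- Concavity of `t ↦ t * (G - t)^m` on `[a, 2a]`. -/
lemma agn_concave_phi (G a : ℝ) (m : ℕ) (hm : 1 ≤ m) (ha : 0 < a)
    (h2 : ((m : ℝ) + 1) * (2 * a) ≤ 2 * G) :
    ConcaveOn ℝ (Set.Icc a (2 * a)) (fun t => t * (G - t) ^ m) := by
  have hG2a : 2 * a ≤ G := by
    have h1m : (1:ℝ) ≤ (m:ℝ) := by exact_mod_cast hm
    nlinarith
  refine concaveOn_of_hasDerivWithinAt2_nonpos (f' := fun t => (G - t) ^ m - t * ((m : ℝ) * (G - t) ^ (m - 1)))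
    (f'' := fun t => t * ((m : ℝ) * (((m : ℝ) - 1) * (G - t) ^ (m - 1 - 1))) - 2 * ((m : ℝ) * (G - t) ^ (m - 1)))
    (convex_Icc _ _) ?_ ?_ ?_ ?_
  · fun_prop
  · intro t ht
    have h1 : HasDerivAt (fun t : ℝ => G - t) (-1) t := (hasDerivAt_id t).const_sub G |>.congr_deriv (by ring)
    have h2 : HasDerivAt (fun t : ℝ => (G - t) ^ m) ((m : ℝ) * (G - t) ^ (m - 1) * (-1)) t := h1.pow m
    have h3 : HasDerivAt (fun t : ℝ => t * (G - t) ^ m)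
        (1 * (G - t) ^ m + t * ((m : ℝ) * (G - t) ^ (m - 1) * (-1))) t := (hasDerivAt_id t).mul h2
    refine (h3.congr_deriv (by ring)).hasDerivWithinAt
  · intro t ht
    have h1 : HasDerivAt (fun t : ℝ => G - t) (-1) t := (hasDerivAt_id t).const_sub G |>.congr_deriv (by ring)
    have h2 : HasDerivAt (fun t : ℝ => (G - t) ^ m) ((m : ℝ) * (G - t) ^ (m - 1) * (-1)) t := h1.pow m
    have h4 : HasDerivAt (fun t : ℝ => (G - t) ^ (m - 1)) (((m : ℝ) - 1) * (G - t) ^ (m - 1 - 1) * (-1)) t := by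
      have := h1.pow (m - 1)
      have hc : ((m - 1 : ℕ) : ℝ) = (m : ℝ) - 1 := by
        rw [Nat.cast_sub hm]; norm_num
      rwa [hc] at this
    have h5 : HasDerivAt (fun t : ℝ => t * ((m : ℝ) * (G - t) ^ (m - 1)))
        (1 * ((m : ℝ) * (G - t) ^ (m - 1)) + t * ((m : ℝ) * (((m : ℝ) - 1) * (G - t) ^ (m - 1 - 1) * (-1)))) t :=
      (hasDerivAt_id t).mul (h4.const_mul (m : ℝ))
    have h6 := h2.sub h5
    refine (h6.congr_deriv (by ring)).hasDerivWithinAt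
  · intro t ht
    rw [interior_Icc] at ht
    obtain ⟨hta, htb⟩ := ht
    have hGt : 0 < G - t := by linarith
    rcases eq_or_lt_of_le hm with hm1 | hm2
    · show t * ((m : ℝ) * (((m : ℝ) - 1) * (G - t) ^ (m - 1 - 1))) - 2 * ((m : ℝ) * (G - t) ^ (m - 1)) ≤ 0
      rw [← hm1]
      norm_num
    · -- m ≥ 2
      have hm2' : 2 ≤ m := hm2
      have hfac : (G - t) ^ (m - 1) = (G - t) ^ (m - 1 - 1) * (G - t) := by
        rw [← pow_succ]
        congr 1
        omega
      have hpow : (0 : ℝ) ≤ (G - t) ^ (m - 1 - 1) := by positivity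
      have hkey : ((m : ℝ) - 1) * t ≤ 2 * (G - t) := by
        have hmc : (2 : ℝ) ≤ (m : ℝ) := by exact_mod_cast hm2'
        nlinarith
      have hmpos : (0 : ℝ) ≤ (m : ℝ) := by positivity
      show t * ((m : ℝ) * (((m : ℝ) - 1) * (G - t) ^ (m - 1 - 1))) - 2 * ((m : ℝ) * (G - t) ^ (m - 1)) ≤ 0
      rw [hfac]
      nlinarith [mul_nonneg hmpos hpow, mul_le_mul_of_nonneg_left hkey (mul_nonneg hmpos hpow)]

variable {ι : Type*} [DecidableEq ι]

/-- Double counting: `(m+1) e_{m+1}(s) = Σ_{j∈s} g j · e_m(s \ {j})`. -/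
lemma agn_esymm_rec (s : Finset ι) (g : ι → ℝ) (m : ℕ) :
    ((m + 1 : ℕ) : ℝ) * ∑ A ∈ s.powersetCard (m + 1), ∏ j ∈ A, g j
      = ∑ j ∈ s, g j * ∑ A ∈ (s.erase j).powersetCard m, ∏ i ∈ A, g i := by
  have hL : ((m + 1 : ℕ) : ℝ) * ∑ A ∈ s.powersetCard (m + 1), ∏ j ∈ A, g j
      = ∑ p ∈ (s.powersetCard (m + 1)).sigma (fun B => B), ∏ i ∈ p.1, g i := by
    rw [Finset.sum_sigma, Finset.mul_sum]
    refine Finset.sum_congr rfl fun B hB => ?_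
    show _ = ∑ _j ∈ B, ∏ i ∈ B, g i
    rw [Finset.sum_const, (Finset.mem_powersetCard.1 hB).2, nsmul_eq_mul]
  have hR : ∑ j ∈ s, g j * ∑ A ∈ (s.erase j).powersetCard m, ∏ i ∈ A, g i
      = ∑ p ∈ s.sigma (fun j => (s.erase j).powersetCard m), ∏ i ∈ insert p.1 p.2, g i := by
    rw [Finset.sum_sigma]
    refine Finset.sum_congr rfl fun j hj => ?_
    rw [Finset.mul_sum]
    refine Finset.sum_congr rfl fun A hA => ?_
    rw [Finset.mem_powersetCard] at hA
    rw [Finset.prod_insert (fun hjA => (Finset.mem_erase.1 (hA.1 hjA)).1 rfl)]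
  rw [hL, hR]
  refine Finset.sum_nbij' (i := fun p => (⟨p.2, p.1.erase p.2⟩ : Σ j : ι, Finset ι))
    (j := fun p => (⟨insert p.1 p.2, p.1⟩ : Σ B : Finset ι, ι)) ?_ ?_ ?_ ?_ ?_
  · rintro ⟨B, j⟩ hp
    rw [Finset.mem_sigma] at hp ⊢
    obtain ⟨hB, hj⟩ := hp
    rw [Finset.mem_powersetCard] at hB
    refine ⟨hB.1 hj, ?_⟩
    rw [Finset.mem_powersetCard]
    constructor
    · exact fun i hi => Finset.mem_erase.2 ⟨(Finset.mem_erase.1 hi).1, hB.1 (Finset.mem_erase.1 hi).2⟩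
    · rw [Finset.card_erase_of_mem hj, hB.2]
      omega
  · rintro ⟨j, A⟩ hp
    rw [Finset.mem_sigma] at hp ⊢
    obtain ⟨hj, hA⟩ := hp
    rw [Finset.mem_powersetCard] at hA
    have hjA : j ∉ A := fun h => (Finset.mem_erase.1 (hA.1 h)).1 rfl
    refine ⟨?_, Finset.mem_insert_self _ _⟩
    rw [Finset.mem_powersetCard]
    exact ⟨Finset.insert_subset hj (hA.1.trans (Finset.erase_subset _ _)),
      by rw [Finset.card_insert_of_notMem hjA, hA.2]⟩
  · rintro ⟨B, j⟩ hp
    rw [Finset.mem_sigma] at hp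
    simp only [Sigma.mk.inj_iff, heq_eq_eq]
    exact ⟨Finset.insert_erase hp.2, trivial⟩
  · rintro ⟨j, A⟩ hp
    rw [Finset.mem_sigma] at hp
    obtain ⟨hj, hA⟩ := hp
    rw [Finset.mem_powersetCard] at hA
    have hjA : j ∉ A := fun h => (Finset.mem_erase.1 (hA.1 h)).1 rfl
    simp only [Sigma.mk.inj_iff, heq_eq_eq]
    exact ⟨trivial, Finset.erase_insert hjA⟩
  · rintro ⟨B, j⟩ hp
    rw [Finset.mem_sigma] at hp
    simp only []
    rw [Finset.insert_erase hp.2]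

/-- Maclaurin-type bound: `e_m(g) ≤ C(card s, m) · mean^m` for values in `[a, 2a]`. -/
lemma agn_esymm_le (g : ι → ℝ) (a : ℝ) (ha : 0 < a) :
    ∀ (m : ℕ) (s : Finset ι), (∀ j ∈ s, a ≤ g j ∧ g j ≤ 2 * a) → m ≤ s.card →
      ∑ A ∈ s.powersetCard m, ∏ j ∈ A, g j
        ≤ (s.card.choose m : ℝ) * ((∑ j ∈ s, g j) / s.card) ^ m := by
  intro m
  induction m with
  | zero => intro s _ _; simp
  | succ m ih =>
    intro s hg hms
    have hc1 : 1 ≤ s.card := le_trans (Nat.le_add_left 1 m) hms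
    have hcR : (0 : ℝ) < (s.card : ℝ) := by exact_mod_cast hc1
    set c : ℕ := s.card with hc
    set G : ℝ := ∑ j ∈ s, g j with hG
    have hGa : (c : ℝ) * a ≤ G := by
      rw [hG]
      calc (c : ℝ) * a = ∑ _j ∈ s, a := by rw [Finset.sum_const, nsmul_eq_mul]
      _ ≤ ∑ j ∈ s, g j := Finset.sum_le_sum fun j hj => (hg j hj).1
    have hG2a : G ≤ (c : ℝ) * (2 * a) := by
      rw [hG]
      calc ∑ j ∈ s, g j ≤ ∑ _j ∈ s, 2 * a := Finset.sum_le_sum fun j hj => (hg j hj).2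
      _ = (c : ℝ) * (2 * a) := by rw [Finset.sum_const, nsmul_eq_mul]
    have hGpos : 0 < G := lt_of_lt_of_le (by positivity) hGa
    have hmean : a ≤ G / c ∧ G / c ≤ 2 * a := by
      constructor
      · rw [le_div_iff₀ hcR]; linarith
      · rw [div_le_iff₀ hcR]; linarith
    -- reduce to the recurrence
    have hrec := agn_esymm_rec s g m
    have hstep : ∑ j ∈ s, g j * ∑ A ∈ (s.erase j).powersetCard m, ∏ i ∈ A, g i
        ≤ ((c - 1 : ℕ).choose m : ℝ) * (c : ℝ) * (G / c) ^ (m + 1) := by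
      rcases Nat.eq_zero_or_pos m with hm0 | hm1
      · subst hm0
        simp only [Finset.powersetCard_zero, Finset.sum_singleton, Finset.prod_empty, mul_one,
          Nat.choose_zero_right, Nat.cast_one, one_mul, pow_one]
        rw [pow_one, mul_div_cancel₀ _ (ne_of_gt hcR)]
      · -- m ≥ 1, so c ≥ m + 1 ≥ 2
        have hc2 : 2 ≤ c := le_trans (by omega) hms
        have hc1R : (0 : ℝ) < ((c : ℝ) - 1) := by
          have : (2 : ℝ) ≤ (c : ℝ) := by exact_mod_cast hc2
          linarith
        have hcast : ((c - 1 : ℕ) : ℝ) = (c : ℝ) - 1 := by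
          rw [Nat.cast_sub hc1]; norm_num
        -- apply IH to each erase
        have h1 : ∀ j ∈ s, g j * ∑ A ∈ (s.erase j).powersetCard m, ∏ i ∈ A, g i
            ≤ ((c - 1 : ℕ).choose m : ℝ) / ((c : ℝ) - 1) ^ m * (g j * (G - g j) ^ m) := by
          intro j hj
          have hsub : ∀ i ∈ s.erase j, a ≤ g i ∧ g i ≤ 2 * a :=
            fun i hi => hg i (Finset.mem_erase.1 hi).2
          have hcard : (s.erase j).card = c - 1 := by rw [Finset.card_erase_of_mem hj]
          have hmc : m ≤ (s.erase j).card := by rw [hcard]; omega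
          have := ih (s.erase j) hsub hmc
          rw [hcard] at this
          have hsum : ∑ i ∈ s.erase j, g i = G - g j := by
            rw [hG, ← Finset.sum_erase_add s g hj]; ring
          rw [hsum, hcast] at this
          have hgj0 : 0 ≤ g j := le_of_lt (lt_of_lt_of_le ha (hg j hj).1)
          calc g j * ∑ A ∈ (s.erase j).powersetCard m, ∏ i ∈ A, g i
              ≤ g j * (((c - 1 : ℕ).choose m : ℝ) * ((G - g j) / ((c : ℝ) - 1)) ^ m) :=
                mul_le_mul_of_nonneg_left this hgj0
            _ = ((c - 1 : ℕ).choose m : ℝ) / ((c : ℝ) - 1) ^ m * (g j * (G - g j) ^ m) := by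
                rw [div_pow]; ring
        have h2 : ∑ j ∈ s, g j * (G - g j) ^ m ≤ (c : ℝ) * ((G / c) * (G - G / c) ^ m) := by
          have hconc : ConcaveOn ℝ (Set.Icc a (2 * a)) (fun t => t * (G - t) ^ m) := by
            refine agn_concave_phi G a m hm1 ha ?_
            have hmc : ((m : ℝ) + 1) ≤ (c : ℝ) := by exact_mod_cast hms
            nlinarith
          have hjen := hconc.le_map_sum (t := s) (w := fun _ => 1 / (c : ℝ)) (p := g)
            (fun j _ => by positivity)
            (by rw [Finset.sum_const, nsmul_eq_mul]; field_simp; rfl)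
            (fun j hj => Set.mem_Icc.2 (hg j hj))
          have hmeanpt : ∑ j ∈ s, (1 / (c : ℝ)) • g j = G / c := by
            simp only [smul_eq_mul, ← Finset.mul_sum, ← hG]
            ring
          rw [hmeanpt] at hjen
          have : ∑ j ∈ s, (1 / (c : ℝ)) • (g j * (G - g j) ^ m)
              = (1 / (c : ℝ)) * ∑ j ∈ s, g j * (G - g j) ^ m := by
            simp only [smul_eq_mul, ← Finset.mul_sum]
          rw [this] at hjen
          calc ∑ j ∈ s, g j * (G - g j) ^ m
              = (c : ℝ) * ((1 / (c : ℝ)) * ∑ j ∈ s, g j * (G - g j) ^ m) := by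
                field_simp
            _ ≤ (c : ℝ) * ((G / c) * (G - G / c) ^ m) :=
                mul_le_mul_of_nonneg_left hjen (le_of_lt hcR)
        have hGGc : G - G / c = ((c : ℝ) - 1) * (G / c) := by field_simp
        have hch0 : (0 : ℝ) ≤ ((c - 1 : ℕ).choose m : ℝ) := by positivity
        calc ∑ j ∈ s, g j * ∑ A ∈ (s.erase j).powersetCard m, ∏ i ∈ A, g i
            ≤ ∑ j ∈ s, ((c - 1 : ℕ).choose m : ℝ) / ((c : ℝ) - 1) ^ m * (g j * (G - g j) ^ m) :=
              Finset.sum_le_sum h1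
          _ = ((c - 1 : ℕ).choose m : ℝ) / ((c : ℝ) - 1) ^ m * ∑ j ∈ s, g j * (G - g j) ^ m := by
              rw [Finset.mul_sum]
          _ ≤ ((c - 1 : ℕ).choose m : ℝ) / ((c : ℝ) - 1) ^ m * ((c : ℝ) * ((G / c) * (G - G / c) ^ m)) := by
              refine mul_le_mul_of_nonneg_left h2 (by positivity)
          _ = ((c - 1 : ℕ).choose m : ℝ) * (c : ℝ) * (G / c) ^ (m + 1) := by
              rw [hGGc, mul_pow, pow_succ]
              field_simp
    -- combine
    have hm1R : (0 : ℝ) < ((m : ℝ) + 1) := by positivity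
    have hLHS : ∑ A ∈ s.powersetCard (m + 1), ∏ j ∈ A, g j
        = (∑ j ∈ s, g j * ∑ A ∈ (s.erase j).powersetCard m, ∏ i ∈ A, g i) / ((m : ℝ) + 1) := by
      rw [← hrec]
      push_cast
      field_simp
    rw [hLHS]
    rw [div_le_iff₀ hm1R]
    have hchoose : ((c - 1 : ℕ).choose m : ℝ) * (c : ℝ) = (c.choose (m + 1) : ℝ) * ((m : ℝ) + 1) := by
      have h := Nat.add_one_mul_choose_eq (c - 1) m
      have hc' : c - 1 + 1 = c := by omega
      rw [hc'] at h
      have h2 : ((c : ℕ) * (c - 1).choose m : ℝ) = ((c.choose (m + 1) * (m + 1) : ℕ) : ℝ) := by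
        exact_mod_cast congrArg (Nat.cast : ℕ → ℝ) h
      push_cast at h2
      linarith
    calc ∑ j ∈ s, g j * ∑ A ∈ (s.erase j).powersetCard m, ∏ i ∈ A, g i
        ≤ ((c - 1 : ℕ).choose m : ℝ) * (c : ℝ) * (G / c) ^ (m + 1) := hstep
      _ = (c.choose (m + 1) : ℝ) * (G / c) ^ (m + 1) * ((m : ℝ) + 1) := by rw [hchoose]; ring

lemma agn_chord_lo {w : ℝ} (h0 : 0 ≤ w) (h1 : w ≤ 1) :
    Real.exp (-(Real.log 2) * w) ≤ 1 - w / 2 := by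
  have hseg : Real.exp ((1 - w) • (0 : ℝ) + w • (-(Real.log 2)))
      ≤ (1 - w) • Real.exp 0 + w • Real.exp (-(Real.log 2)) :=
    convexOn_exp.2 (Set.mem_univ _) (Set.mem_univ _) (by linarith) h0 (by ring)
  simp only [smul_eq_mul, mul_zero, zero_add, Real.exp_zero, mul_one] at hseg
  have hexp : Real.exp (-(Real.log 2)) = 1 / 2 := by
    rw [Real.exp_neg, Real.exp_log two_pos]; norm_num
  rw [hexp] at hseg
  calc Real.exp (-(Real.log 2) * w) = Real.exp (w * -(Real.log 2)) := by ring_nf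
    _ ≤ (1 - w) + w * (1 / 2) := hseg
    _ = 1 - w / 2 := by ring

lemma agn_chord_hi {w : ℝ} (h0 : 0 ≤ w) (h1 : w ≤ 1) :
    Real.exp (Real.log 2 * w) ≤ 1 + w := by
  have hseg : Real.exp ((1 - w) • (0 : ℝ) + w • (Real.log 2))
      ≤ (1 - w) • Real.exp 0 + w • Real.exp (Real.log 2) :=
    convexOn_exp.2 (Set.mem_univ _) (Set.mem_univ _) (by linarith) h0 (by ring)
  simp only [smul_eq_mul, mul_zero, zero_add, Real.exp_zero, mul_one] at hseg
  rw [Real.exp_log two_pos] at hseg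
  calc Real.exp (Real.log 2 * w) = Real.exp (w * Real.log 2) := by ring_nf
    _ ≤ (1 - w) + w * 2 := hseg
    _ = 1 + w := by ring

/-- Chernoff counting bound over `m`-subsets for the two-sided multiplicative deviation event. -/
lemma agn_badW_count (n m : ℕ) (hm : 1 ≤ m) (hmn : m ≤ n) (w : Fin n → ℝ)
    (hw : ∀ j, 0 ≤ w j ∧ w j ≤ 1) (K : ℝ) (hK : 0 ≤ K) :
    ((((univ : Finset (Fin n)).powersetCard m).filter (fun A =>
        ¬ ((1 / (n : ℝ)) * ∑ j, w j ≤ 2 * ((1 / (m : ℝ)) * ∑ j ∈ A, w j) + K / m ∧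
           (1 / (m : ℝ)) * ∑ j ∈ A, w j ≤ 2 * ((1 / (n : ℝ)) * ∑ j, w j) + K / m))).card : ℝ)
      ≤ 2 * Real.exp (-(Real.log 2 / 2) * K) * (n.choose m) := by
  classical
  have hnpos : (0 : ℝ) < (n : ℝ) := by
    have : (1 : ℕ) ≤ n := le_trans hm hmn
    exact_mod_cast Nat.lt_of_lt_of_le Nat.zero_lt_one this
  have hmpos : (0 : ℝ) < (m : ℝ) := by exact_mod_cast hm
  set μ : ℝ := (1 / (n : ℝ)) * ∑ j, w j with hμ
  have hμ0 : 0 ≤ μ := mul_nonneg (by positivity) (Finset.sum_nonneg fun j _ => (hw j).1)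
  have hnμ : (n : ℝ) * μ = ∑ j, w j := by rw [hμ]; field_simp
  have hlog2pos : (0 : ℝ) < Real.log 2 := Real.log_pos one_lt_two
  have hlog2le : Real.log 2 ≤ 1 := by
    calc Real.log 2 ≤ 2 - 1 := Real.log_le_sub_one_of_pos two_pos
      _ = 1 := by norm_num
  have hlog2half : (1 : ℝ) / 2 ≤ Real.log 2 := by
    have := Real.log_two_gt_d9
    linarith
  set E : ℝ := Real.exp (-(Real.log 2 / 2) * K) with hE
  set bad1 : Finset (Fin n) → Prop := fun A => ∑ j ∈ A, w j ≤ ((m : ℝ) * μ - K) / 2 with hbad1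
  set bad2 : Finset (Fin n) → Prop := fun A => 2 * (m : ℝ) * μ + K ≤ ∑ j ∈ A, w j with hbad2
  have hsubset : ((univ : Finset (Fin n)).powersetCard m).filter (fun A =>
        ¬ ((1 / (n : ℝ)) * ∑ j, w j ≤ 2 * ((1 / (m : ℝ)) * ∑ j ∈ A, w j) + K / m ∧
           (1 / (m : ℝ)) * ∑ j ∈ A, w j ≤ 2 * ((1 / (n : ℝ)) * ∑ j, w j) + K / m))
      ⊆ ((univ : Finset (Fin n)).powersetCard m).filter bad1 ∪
        ((univ : Finset (Fin n)).powersetCard m).filter bad2 := by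
    intro A hA
    rw [Finset.mem_filter] at hA
    obtain ⟨hApc, hAbad⟩ := hA
    rw [not_and_or] at hAbad
    rw [Finset.mem_union, Finset.mem_filter, Finset.mem_filter]
    rcases hAbad with h | h
    · left
      refine ⟨hApc, ?_⟩
      rw [not_le] at h
      show ∑ j ∈ A, w j ≤ ((m : ℝ) * μ - K) / 2
      have h' := mul_lt_mul_of_pos_left h hmpos
      rw [mul_add, mul_div_cancel₀ _ (ne_of_gt hmpos)] at h'
      have h2' : (m : ℝ) * (2 * ((1 / (m : ℝ)) * ∑ j ∈ A, w j)) = 2 * ∑ j ∈ A, w j := by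
        field_simp
      rw [h2', ← hμ] at h'
      linarith
    · right
      refine ⟨hApc, ?_⟩
      rw [not_le] at h
      show 2 * (m : ℝ) * μ + K ≤ ∑ j ∈ A, w j
      have h' := mul_lt_mul_of_pos_left h hmpos
      rw [mul_add, mul_div_cancel₀ _ (ne_of_gt hmpos)] at h'
      have h2' : (m : ℝ) * ((1 / (m : ℝ)) * ∑ j ∈ A, w j) = ∑ j ∈ A, w j := by
        field_simp
      rw [h2', ← hμ] at h'
      linarith
  have hcardn : ((univ : Finset (Fin n))).card = n := by simp
  have hmn' : m ≤ ((univ : Finset (Fin n))).card := by rw [hcardn]; exact hmn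
  have hmμ0 : 0 ≤ (m : ℝ) * μ := mul_nonneg (le_of_lt hmpos) hμ0
  -- tail 1
  have hcount1 : ((((univ : Finset (Fin n)).powersetCard m).filter bad1).card : ℝ)
      ≤ E * (n.choose m) := by
    set g : Fin n → ℝ := fun j => Real.exp (-(Real.log 2) * w j) with hg
    have hga : ∀ j ∈ (univ : Finset (Fin n)), (1:ℝ)/2 ≤ g j ∧ g j ≤ 2 * (1/2) := by
      intro j _
      constructor
      · have h1 : -(Real.log 2) ≤ -(Real.log 2) * w j := by nlinarith [(hw j).1, (hw j).2]
        calc (1:ℝ)/2 = Real.exp (-(Real.log 2)) := by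
              rw [Real.exp_neg, Real.exp_log two_pos]; norm_num
          _ ≤ g j := Real.exp_le_exp.2 h1
      · have h1 : -(Real.log 2) * w j ≤ 0 := by nlinarith [(hw j).1]
        calc g j ≤ 1 := Real.exp_le_one_iff.2 h1
          _ = 2 * (1/2) := by norm_num
    have hesymm := agn_esymm_le g (1/2) (by norm_num) m univ hga hmn'
    rw [hcardn] at hesymm
    have hg0 : ∀ j, (0:ℝ) ≤ g j := fun j => Real.exp_nonneg _
    have havg : (∑ j, g j) / (n : ℝ) ≤ 1 - μ / 2 := by
      rw [div_le_iff₀ hnpos]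
      calc ∑ j, g j ≤ ∑ j, (1 - w j / 2) :=
            Finset.sum_le_sum fun j _ => agn_chord_lo (hw j).1 (hw j).2
        _ = (n : ℝ) - (∑ j, w j) / 2 := by
            rw [Finset.sum_sub_distrib]
            simp [Finset.sum_div]
        _ = (1 - μ / 2) * (n : ℝ) := by rw [← hnμ]; ring
    have havg0 : 0 ≤ (∑ j, g j) / (n : ℝ) :=
      div_nonneg (Finset.sum_nonneg fun j _ => hg0 j) (le_of_lt hnpos)
    have hpow : ((∑ j, g j) / (n : ℝ)) ^ m ≤ Real.exp (-((m : ℝ) * μ) / 2) := by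
      calc ((∑ j, g j) / (n : ℝ)) ^ m ≤ (Real.exp (-μ/2)) ^ m := by
            refine pow_le_pow_left₀ havg0 (le_trans havg ?_) m
            have := Real.add_one_le_exp (-μ/2)
            linarith
        _ = Real.exp ((m : ℝ) * (-μ/2)) := by rw [← Real.exp_nat_mul]
        _ = Real.exp (-((m : ℝ) * μ) / 2) := by ring_nf
    have hcard : ((((univ : Finset (Fin n)).powersetCard m).filter bad1).card : ℝ)
        ≤ Real.exp (Real.log 2 * (((m : ℝ) * μ - K) / 2)) *
          ∑ A ∈ (univ : Finset (Fin n)).powersetCard m, ∏ j ∈ A, g j := by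
      rw [Finset.card_eq_sum_ones, Nat.cast_sum, Finset.mul_sum]
      refine le_trans (Finset.sum_le_sum (fun A hA => ?_))
        (Finset.sum_le_sum_of_subset_of_nonneg (Finset.filter_subset _ _) fun A _ _ =>
          mul_nonneg (Real.exp_nonneg _) (Finset.prod_nonneg fun j _ => hg0 j))
      rw [Finset.mem_filter] at hA
      have hbA : ∑ j ∈ A, w j ≤ ((m : ℝ) * μ - K) / 2 := hA.2
      have hprod : ∏ j ∈ A, g j = Real.exp (-(Real.log 2) * ∑ j ∈ A, w j) := by
        rw [Finset.mul_sum, ← Real.exp_sum]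
      rw [hprod, ← Real.exp_add, Nat.cast_one]
      refine Real.one_le_exp ?_
      nlinarith [mul_nonneg (le_of_lt hlog2pos) (sub_nonneg.2 hbA)]
    calc ((((univ : Finset (Fin n)).powersetCard m).filter bad1).card : ℝ)
        ≤ Real.exp (Real.log 2 * (((m : ℝ) * μ - K) / 2)) *
          ∑ A ∈ (univ : Finset (Fin n)).powersetCard m, ∏ j ∈ A, g j := hcard
      _ ≤ Real.exp (Real.log 2 * (((m : ℝ) * μ - K) / 2)) *
          ((n.choose m : ℝ) * Real.exp (-((m : ℝ) * μ) / 2)) := by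
          refine mul_le_mul_of_nonneg_left (le_trans hesymm ?_) (Real.exp_nonneg _)
          exact mul_le_mul_of_nonneg_left hpow (by positivity)
      _ = (n.choose m : ℝ) * Real.exp (Real.log 2 * (((m : ℝ) * μ - K) / 2) + -((m : ℝ) * μ) / 2) := by
          rw [Real.exp_add]; ring
      _ ≤ E * (n.choose m) := by
          have hexp : Real.log 2 * (((m : ℝ) * μ - K) / 2) + -((m : ℝ) * μ) / 2
              ≤ -(Real.log 2 / 2) * K := by nlinarith
          calc (n.choose m : ℝ) * Real.exp (Real.log 2 * (((m : ℝ) * μ - K) / 2) + -((m : ℝ) * μ) / 2)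
              ≤ (n.choose m : ℝ) * E := by
                refine mul_le_mul_of_nonneg_left ?_ (by positivity)
                rw [hE]
                exact Real.exp_le_exp.2 hexp
            _ = E * (n.choose m) := by ring
  -- tail 2
  have hcount2 : ((((univ : Finset (Fin n)).powersetCard m).filter bad2).card : ℝ)
      ≤ E * (n.choose m) := by
    set g : Fin n → ℝ := fun j => Real.exp (Real.log 2 * w j) with hg
    have hga : ∀ j ∈ (univ : Finset (Fin n)), (1:ℝ) ≤ g j ∧ g j ≤ 2 * 1 := by
      intro j _
      constructor
      · refine Real.one_le_exp ?_
        exact mul_nonneg (le_of_lt hlog2pos) (hw j).1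
      · have h1 : Real.log 2 * w j ≤ Real.log 2 := by nlinarith [(hw j).1, (hw j).2]
        calc g j ≤ Real.exp (Real.log 2) := Real.exp_le_exp.2 h1
          _ = 2 := Real.exp_log two_pos
          _ = 2 * 1 := by norm_num
    have hesymm := agn_esymm_le g 1 (by norm_num) m univ hga hmn'
    rw [hcardn] at hesymm
    have hg0 : ∀ j, (0:ℝ) ≤ g j := fun j => Real.exp_nonneg _
    have havg : (∑ j, g j) / (n : ℝ) ≤ 1 + μ := by
      rw [div_le_iff₀ hnpos]
      calc ∑ j, g j ≤ ∑ j, (1 + w j) :=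
            Finset.sum_le_sum fun j _ => agn_chord_hi (hw j).1 (hw j).2
        _ = (n : ℝ) + ∑ j, w j := by
            rw [Finset.sum_add_distrib]
            simp
        _ = (1 + μ) * (n : ℝ) := by rw [← hnμ]; ring
    have havg0 : 0 ≤ (∑ j, g j) / (n : ℝ) :=
      div_nonneg (Finset.sum_nonneg fun j _ => hg0 j) (le_of_lt hnpos)
    have hpow : ((∑ j, g j) / (n : ℝ)) ^ m ≤ Real.exp ((m : ℝ) * μ) := by
      calc ((∑ j, g j) / (n : ℝ)) ^ m ≤ (Real.exp μ) ^ m := by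
            refine pow_le_pow_left₀ havg0 (le_trans havg ?_) m
            have := Real.add_one_le_exp μ
            linarith
        _ = Real.exp ((m : ℝ) * μ) := by rw [← Real.exp_nat_mul]
    have hcard : ((((univ : Finset (Fin n)).powersetCard m).filter bad2).card : ℝ)
        ≤ Real.exp (-(Real.log 2) * (2 * (m : ℝ) * μ + K)) *
          ∑ A ∈ (univ : Finset (Fin n)).powersetCard m, ∏ j ∈ A, g j := by
      rw [Finset.card_eq_sum_ones, Nat.cast_sum, Finset.mul_sum]
      refine le_trans (Finset.sum_le_sum (fun A hA => ?_))
        (Finset.sum_le_sum_of_subset_of_nonneg (Finset.filter_subset _ _) fun A _ _ =>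
          mul_nonneg (Real.exp_nonneg _) (Finset.prod_nonneg fun j _ => hg0 j))
      rw [Finset.mem_filter] at hA
      have hbA : 2 * (m : ℝ) * μ + K ≤ ∑ j ∈ A, w j := hA.2
      have hprod : ∏ j ∈ A, g j = Real.exp (Real.log 2 * ∑ j ∈ A, w j) := by
        rw [Finset.mul_sum, ← Real.exp_sum]
      rw [hprod, ← Real.exp_add, Nat.cast_one]
      refine Real.one_le_exp ?_
      nlinarith [mul_nonneg (le_of_lt hlog2pos) (sub_nonneg.2 hbA)]
    calc ((((univ : Finset (Fin n)).powersetCard m).filter bad2).card : ℝ)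
        ≤ Real.exp (-(Real.log 2) * (2 * (m : ℝ) * μ + K)) *
          ∑ A ∈ (univ : Finset (Fin n)).powersetCard m, ∏ j ∈ A, g j := hcard
      _ ≤ Real.exp (-(Real.log 2) * (2 * (m : ℝ) * μ + K)) *
          ((n.choose m : ℝ) * Real.exp ((m : ℝ) * μ)) := by
          refine mul_le_mul_of_nonneg_left (le_trans hesymm ?_) (Real.exp_nonneg _)
          exact mul_le_mul_of_nonneg_left hpow (by positivity)
      _ = (n.choose m : ℝ) * Real.exp (-(Real.log 2) * (2 * (m : ℝ) * μ + K) + (m : ℝ) * μ) := by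
          rw [Real.exp_add]; ring
      _ ≤ E * (n.choose m) := by
          have hexp : -(Real.log 2) * (2 * (m : ℝ) * μ + K) + (m : ℝ) * μ
              ≤ -(Real.log 2 / 2) * K := by nlinarith
          calc (n.choose m : ℝ) * Real.exp (-(Real.log 2) * (2 * (m : ℝ) * μ + K) + (m : ℝ) * μ)
              ≤ (n.choose m : ℝ) * E := by
                refine mul_le_mul_of_nonneg_left ?_ (by positivity)
                rw [hE]
                exact Real.exp_le_exp.2 hexp
            _ = E * (n.choose m) := by ring
  -- combine
  have h1 := Finset.card_le_card hsubset
  have h2 := Finset.card_union_le (((univ : Finset (Fin n)).powersetCard m).filter bad1)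
    (((univ : Finset (Fin n)).powersetCard m).filter bad2)
  have h3 := le_trans h1 h2
  have h4 := (Nat.cast_le (α := ℝ)).2 h3
  rw [Nat.cast_add] at h4
  have h5 := le_trans h4 (add_le_add hcount1 hcount2)
  calc _ ≤ E * (n.choose m) + E * (n.choose m) := h5
    _ = 2 * Real.exp (-(Real.log 2 / 2) * K) * (n.choose m) := by rw [hE]; ring

variable {n m : ℕ}

lemma agn_card_F (hmn : m ≤ n) :
    ((univ : Finset (Fin n)).filter (fun i : Fin n => (i : ℕ) < m)).card = m := by
  classical
  have himg : ((univ : Finset (Fin m)).image (Fin.castLE hmn))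
      = (univ : Finset (Fin n)).filter (fun i : Fin n => (i : ℕ) < m) := by
    ext i
    simp only [Finset.mem_image, Finset.mem_filter, Finset.mem_univ, true_and]
    constructor
    · rintro ⟨k, -, rfl⟩
      exact k.2
    · intro hi
      exact ⟨⟨(i : ℕ), hi⟩, by apply Fin.ext; rfl⟩
  rw [← himg, Finset.card_image_of_injective _ (Fin.castLE_injective hmn)]
  simp

lemma agn_exists_perm_image (hmn : m ≤ n) (A : Finset (Fin n)) (hA : A.card = m) :
    ∃ π : Equiv.Perm (Fin n),
      ((univ : Finset (Fin n)).filter (fun i : Fin n => (i : ℕ) < m)).image ⇑π = A := by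
  classical
  set F : Finset (Fin n) := (univ : Finset (Fin n)).filter (fun i : Fin n => (i : ℕ) < m) with hF
  have hFA : F.card = A.card := by rw [agn_card_F hmn, hA]
  have hFAc : Fᶜ.card = Aᶜ.card := by
    rw [Finset.card_compl, Finset.card_compl, hFA]
  let e₁ : {x // x ∈ F} ≃ {x // x ∈ A} := Finset.equivOfCardEq hFA
  let e₂ : {x // x ∈ Fᶜ} ≃ {x // x ∈ Aᶜ} := Finset.equivOfCardEq hFAc
  let e₂' : {x // x ∉ F} ≃ {x // x ∉ A} :=
    ((Equiv.subtypeEquivRight (fun x => (Finset.mem_compl).symm)).trans e₂).trans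
      (Equiv.subtypeEquivRight (fun x => Finset.mem_compl))
  let π : Equiv.Perm (Fin n) :=
    ((Equiv.sumCompl (· ∈ F)).symm.trans (e₁.sumCongr e₂')).trans (Equiv.sumCompl (· ∈ A))
  refine ⟨π, ?_⟩
  have hsub : F.image ⇑π ⊆ A := by
    intro y hy
    rw [Finset.mem_image] at hy
    obtain ⟨j, hj, rfl⟩ := hy
    have hπj : π j = ((e₁ ⟨j, hj⟩ : {x // x ∈ A}) : Fin n) := by
      show (Equiv.sumCompl (· ∈ A)) ((e₁.sumCongr e₂') ((Equiv.sumCompl (· ∈ F)).symm j)) = _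
      rw [Equiv.sumCompl_symm_apply_of_pos hj]
      rfl
    rw [hπj]
    exact (e₁ ⟨j, hj⟩).2
  refine Finset.eq_of_subset_of_card_le hsub ?_
  rw [Finset.card_image_of_injective _ π.injective, hFA]

lemma agn_perm_count (hm : 1 ≤ m) (hmn : m ≤ n) (q : Finset (Fin n) → Prop) [DecidablePred q]
    (δ' : ℝ) (hδ' : 0 ≤ δ')
    (hq : ((((univ : Finset (Fin n)).powersetCard m).filter q).card : ℝ) ≤ δ' * (n.choose m)) :
    (((univ : Finset (Equiv.Perm (Fin n))).filter (fun π : Equiv.Perm (Fin n) =>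
        q (((univ : Finset (Fin n)).filter (fun i : Fin n => (i : ℕ) < m)).image ⇑π))).card : ℝ)
      ≤ δ' * (Nat.factorial n) := by
  classical
  set F : Finset (Fin n) := (univ : Finset (Fin n)).filter (fun i : Fin n => (i : ℕ) < m) with hF
  set Aset : Equiv.Perm (Fin n) → Finset (Fin n) := fun π => F.image ⇑π with hAset
  have himgmul : ∀ (σ τ : Equiv.Perm (Fin n)) (s : Finset (Fin n)),
      s.image ⇑(σ * τ) = (s.image ⇑τ).image ⇑σ := by
    intro σ τ s
    rw [Finset.image_image]
    rfl
  have hinv : ∀ (σ : Equiv.Perm (Fin n)) (s : Finset (Fin n)), (s.image ⇑σ).image ⇑σ⁻¹ = s := by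
    intro σ s
    rw [Finset.image_image]
    have hid : ⇑σ⁻¹ ∘ ⇑σ = id := by
      funext x
      simp
    rw [hid, Finset.image_id]
  have hAmem : ∀ π : Equiv.Perm (Fin n), Aset π ∈ (univ : Finset (Fin n)).powersetCard m := by
    intro π
    rw [Finset.mem_powersetCard_univ, hAset]
    rw [Finset.card_image_of_injective _ π.injective]
    exact agn_card_F hmn
  -- all fibers have equal cardinality
  have hfib : ∀ A ∈ (univ : Finset (Fin n)).powersetCard m,
      ((univ : Finset (Equiv.Perm (Fin n))).filter (fun π => Aset π = A)).card
        = ((univ : Finset (Equiv.Perm (Fin n))).filter (fun π => Aset π = F)).card := by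
    intro A hA
    rw [Finset.mem_powersetCard_univ] at hA
    obtain ⟨πA, hπA⟩ := agn_exists_perm_image hmn A hA
    refine Finset.card_nbij' (fun σ => πA⁻¹ * σ) (fun τ => πA * τ) ?_ ?_ ?_ ?_
    · intro σ hσ
      rw [Finset.mem_coe, Finset.mem_filter] at hσ ⊢
      refine ⟨Finset.mem_univ _, ?_⟩
      rw [hAset]
      show F.image ⇑(πA⁻¹ * σ) = F
      rw [himgmul]
      have : F.image ⇑σ = A := hσ.2
      rw [this, ← hπA, hinv]
    · intro τ hτ
      rw [Finset.mem_coe, Finset.mem_filter] at hτ ⊢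
      refine ⟨Finset.mem_univ _, ?_⟩
      rw [hAset]
      show F.image ⇑(πA * τ) = A
      rw [himgmul]
      have : F.image ⇑τ = F := hτ.2
      rw [this, hπA]
    · intro σ _
      group
    · intro τ _
      group
  -- fiberwise decomposition of the filtered set
  have hgood : ((univ : Finset (Equiv.Perm (Fin n))).filter (fun π => q (Aset π))).card
      = ∑ A ∈ ((univ : Finset (Fin n)).powersetCard m).filter q,
          ((univ : Finset (Equiv.Perm (Fin n))).filter (fun π => Aset π = A)).card := by
    rw [Finset.card_eq_sum_card_fiberwise (f := Aset)
      (t := ((univ : Finset (Fin n)).powersetCard m).filter q) ?_]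
    · refine Finset.sum_congr rfl fun A hA => ?_
      congr 1
      ext π
      rw [Finset.mem_filter, Finset.mem_filter, Finset.mem_filter]
      rw [Finset.mem_filter] at hA
      constructor
      · rintro ⟨⟨-, -⟩, h2⟩
        exact ⟨Finset.mem_univ _, h2⟩
      · rintro ⟨-, h2⟩
        exact ⟨⟨Finset.mem_univ _, h2 ▸ hA.2⟩, h2⟩
    · intro π hπ
      rw [Finset.mem_coe, Finset.mem_filter] at hπ
      rw [Finset.mem_coe, Finset.mem_filter]
      exact ⟨hAmem π, hπ.2⟩
  have htot : Nat.factorial n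
      = ∑ A ∈ (univ : Finset (Fin n)).powersetCard m,
          ((univ : Finset (Equiv.Perm (Fin n))).filter (fun π => Aset π = A)).card := by
    rw [← Finset.card_eq_sum_card_fiberwise (f := Aset)
      (s := (univ : Finset (Equiv.Perm (Fin n)))) (fun π _ => hAmem π)]
    rw [Finset.card_univ, Fintype.card_perm, Fintype.card_fin]
  set c0 : ℕ := ((univ : Finset (Equiv.Perm (Fin n))).filter (fun π => Aset π = F)).card with hc0
  have hgood' : ((univ : Finset (Equiv.Perm (Fin n))).filter (fun π => q (Aset π))).card
      = (((univ : Finset (Fin n)).powersetCard m).filter q).card * c0 := by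
    rw [hgood, Finset.sum_congr rfl (fun A hA => hfib A (Finset.mem_filter.1 hA).1),
      Finset.sum_const, smul_eq_mul]
  have htot' : Nat.factorial n = n.choose m * c0 := by
    rw [htot, Finset.sum_congr rfl (fun A hA => hfib A hA), Finset.sum_const, smul_eq_mul,
      Finset.card_powersetCard, Finset.card_univ, Fintype.card_fin]
  rw [hgood', htot']
  push_cast
  calc (((((univ : Finset (Fin n)).powersetCard m).filter q).card : ℝ)) * (c0 : ℝ)
      ≤ (δ' * (n.choose m)) * (c0 : ℝ) := by
        exact mul_le_mul_of_nonneg_right hq (by positivity)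
    _ = δ' * ((n.choose m : ℝ) * (c0 : ℝ)) := by ring

lemma agn_one_le_clog (y : ℝ) : 1 ≤ clog y := by
  rw [clog]
  calc (1 : ℝ) = Real.log (Real.exp 1) := (Real.log_exp 1).symm
    _ ≤ Real.log (max y (Real.exp 1)) :=
      Real.log_le_log (Real.exp_pos 1) (le_max_right _ _)

lemma agn_exp_clog (y : ℝ) : max y 1 ≤ Real.exp (clog y) := by
  rw [clog, Real.exp_log (lt_of_lt_of_le (Real.exp_pos 1) (le_max_right _ _))]
  exact max_le_max (le_refl y) (by
    calc (1 : ℝ) = Real.exp 0 := Real.exp_zero.symm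
      _ ≤ Real.exp 1 := Real.exp_le_exp.2 zero_le_one)

/-- Sauer–Shelah: the projection of a partial class of VC dimension `≤ d`. -/
lemma agn_card_le_sauer {X : Type*} (G : Set (X → Option Bool)) (d n : ℕ)
    (hnsh : ¬ PShatters G (d + 1)) (x : Fin n → X) (H : Finset (Fin n → Bool))
    (hH : ∀ c, c ∈ H ↔ c ∈ pproj G x) :
    H.card ≤ ∑ k ∈ Finset.range (d + 1), n.choose k := by
  classical
  set 𝒜 : Finset (Finset (Fin n)) :=
    H.image (fun c => (univ : Finset (Fin n)).filter (fun i => c i = true)) with h𝒜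
  have hinj : Set.InjOn (fun c : Fin n → Bool => (univ : Finset (Fin n)).filter (fun i => c i = true)) H := by
    intro c hc c' hc' hcc
    funext i
    have : (i ∈ (univ : Finset (Fin n)).filter (fun i => c i = true))
        ↔ (i ∈ (univ : Finset (Fin n)).filter (fun i => c' i = true)) := by
      simp only at hcc
      rw [hcc]
    simp only [Finset.mem_filter, Finset.mem_univ, true_and] at this
    cases hci : c i <;> cases hci' : c' i
    · rfl
    · exact absurd (this.2 hci') (by rw [hci]; simp)
    · exact absurd (this.1 hci) (by rw [hci']; simp)
    · rfl
  have hcard𝒜 : H.card = 𝒜.card := (Finset.card_image_of_injOn hinj).symm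
  have hshat : ∀ s ∈ 𝒜.shatterer, s.card ≤ d := by
    intro s hs
    by_contra hlt
    push_neg at hlt
    obtain ⟨s', hs's, hs'card⟩ := Finset.exists_subset_card_eq (le_trans hlt (le_refl _))
    have hsh' : 𝒜.Shatters s' := (Finset.mem_shatterer.1 hs).mono_right hs's
    -- build a shattered (d+1)-tuple of points
    apply hnsh
    set σ := s'.orderIsoOfFin hs'card with hσ
    refine ⟨fun i => x ((σ i : Fin n)), ?_⟩
    ext b
    simp only [Set.mem_univ, iff_true]
    set t : Finset (Fin n) :=
      ((univ : Finset (Fin (d + 1))).filter (fun i => b i = true)).image (fun i => (σ i : Fin n)) with ht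
    have hts' : t ⊆ s' := by
      intro j hj
      rw [ht, Finset.mem_image] at hj
      obtain ⟨i, -, rfl⟩ := hj
      exact (σ i).2
    obtain ⟨u, hu𝒜, hsu⟩ := hsh' hts'
    rw [h𝒜, Finset.mem_image] at hu𝒜
    obtain ⟨c, hcH, rfl⟩ := hu𝒜
    obtain ⟨g', hg'G, hg'c⟩ := (hH c).1 hcH
    refine ⟨g', hg'G, fun i => ?_⟩
    rw [hg'c ((σ i : Fin n))]
    congr 1
    -- c (σ i) = b i
    have hmem : ((σ i : Fin n) ∈ s' ∩ ((univ : Finset (Fin n)).filter (fun j => c j = true)))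
        ↔ (σ i : Fin n) ∈ t := by rw [hsu]
    have hleft : ((σ i : Fin n) ∈ s' ∩ ((univ : Finset (Fin n)).filter (fun j => c j = true)))
        ↔ c (σ i : Fin n) = true := by
      simp only [Finset.mem_inter, Finset.mem_filter, Finset.mem_univ, true_and,
        and_iff_right_iff_imp]
      intro _
      exact (σ i).2
    have hright : ((σ i : Fin n) ∈ t) ↔ b i = true := by
      rw [ht, Finset.mem_image]
      constructor
      · rintro ⟨i', hi', heq⟩
        rw [Finset.mem_filter] at hi'
        have : σ i' = σ i := Subtype.ext heq
        have : i' = i := σ.injective this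
        rw [← this]
        exact hi'.2
      · intro hb
        exact ⟨i, Finset.mem_filter.2 ⟨Finset.mem_univ _, hb⟩, rfl⟩
    have : c (σ i : Fin n) = true ↔ b i = true := by
      rw [← hleft, hmem, hright]
    cases hb : b i <;> cases hc : c (σ i : Fin n)
    · rfl
    · rw [hb, hc] at this; simpa using this.1 rfl
    · rw [hb, hc] at this; simpa using this.2 rfl
    · rfl
  have hsub : 𝒜.shatterer ⊆ (Finset.range (d + 1)).biUnion
      (fun k => (univ : Finset (Fin n)).powersetCard k) := by
    intro s hs
    rw [Finset.mem_biUnion]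
    exact ⟨s.card, Finset.mem_range.2 (Nat.lt_succ_of_le (hshat s hs)),
      Finset.mem_powersetCard_univ.2 rfl⟩
  calc H.card = 𝒜.card := hcard𝒜
    _ ≤ 𝒜.shatterer.card := Finset.card_le_card_shatterer 𝒜
    _ ≤ ((Finset.range (d + 1)).biUnion (fun k => (univ : Finset (Fin n)).powersetCard k)).card :=
        Finset.card_le_card hsub
    _ ≤ ∑ k ∈ Finset.range (d + 1), ((univ : Finset (Fin n)).powersetCard k).card :=
        Finset.card_biUnion_le
    _ = ∑ k ∈ Finset.range (d + 1), n.choose k := by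
        refine Finset.sum_congr rfl fun k _ => ?_
        rw [Finset.card_powersetCard, Finset.card_univ, Fintype.card_fin]

/-- Numeric bound on the Sauer-Shelah quantity. -/
lemma agn_sum_choose_le (d n : ℕ) (hd : 1 ≤ d) (hn : 1 ≤ n) :
    ((∑ k ∈ Finset.range (d + 1), n.choose k : ℕ) : ℝ)
      ≤ Real.exp (2 * (d : ℝ) * clog ((n : ℝ) / (d : ℝ))) := by
  have hdR : (0 : ℝ) < (d : ℝ) := by exact_mod_cast hd
  have hnR : (0 : ℝ) < (n : ℝ) := by exact_mod_cast hn
  have step1 : ((∑ k ∈ Finset.range (d + 1), n.choose k : ℕ) : ℝ)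
      ≤ Real.exp d * (max ((n : ℝ) / (d : ℝ)) 1) ^ d := by
    have hmax1 : (1 : ℝ) ≤ max ((n : ℝ) / (d : ℝ)) 1 := le_max_right _ _
    rcases le_or_gt n d with hnd | hdn
    · -- n ≤ d : sum = 2^n ≤ 2^d ≤ exp d
      have hsum : ∑ k ∈ Finset.range (d + 1), n.choose k = 2 ^ n := by
        rw [← Nat.sum_range_choose n]
        symm
        refine Finset.sum_subset ?_ ?_
        · exact Finset.range_subset_range.2 (by omega)
        · intro k _ hk
          rw [Finset.mem_range, not_lt] at hk
          exact Nat.choose_eq_zero_of_lt (by omega)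
      rw [hsum]
      have h2exp : (2 : ℝ) ≤ Real.exp 1 := by
        have := Real.add_one_le_exp 1
        linarith
      calc ((2 ^ n : ℕ) : ℝ) = (2 : ℝ) ^ n := by push_cast; ring
        _ ≤ Real.exp 1 ^ n := pow_le_pow_left₀ (by norm_num) h2exp n
        _ = Real.exp (n : ℝ) := by rw [← Real.exp_nat_mul]; ring_nf
        _ ≤ Real.exp (d : ℝ) := Real.exp_le_exp.2 (by exact_mod_cast hnd)
        _ = Real.exp (d : ℝ) * 1 := by ring
        _ ≤ Real.exp d * (max ((n : ℝ) / (d : ℝ)) 1) ^ d := by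
            refine mul_le_mul_of_nonneg_left ?_ (Real.exp_nonneg _)
            exact one_le_pow₀ hmax1
    · -- d < n
      set y : ℝ := (d : ℝ) / (n : ℝ) with hy
      have hy0 : 0 < y := by positivity
      have hy1 : y ≤ 1 := by
        rw [hy, div_le_one hnR]
        exact_mod_cast le_of_lt hdn
      have hkey : ((∑ k ∈ Finset.range (d + 1), n.choose k : ℕ) : ℝ) * y ^ d ≤ (1 + y) ^ n := by
        have h1 : ((∑ k ∈ Finset.range (d + 1), n.choose k : ℕ) : ℝ) * y ^ d
            = ∑ k ∈ Finset.range (d + 1), (n.choose k : ℝ) * y ^ d := by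
          rw [Nat.cast_sum, Finset.sum_mul]
        rw [h1]
        have h2 : ∑ k ∈ Finset.range (d + 1), (n.choose k : ℝ) * y ^ d
            ≤ ∑ k ∈ Finset.range (d + 1), (n.choose k : ℝ) * y ^ k := by
          refine Finset.sum_le_sum fun k hk => ?_
          rw [Finset.mem_range] at hk
          refine mul_le_mul_of_nonneg_left ?_ (by positivity)
          exact pow_le_pow_of_le_one (le_of_lt hy0) hy1 (by omega)
        refine le_trans h2 ?_
        have h3 : ∑ k ∈ Finset.range (d + 1), (n.choose k : ℝ) * y ^ k
            ≤ ∑ k ∈ Finset.range (n + 1), (n.choose k : ℝ) * y ^ k := by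
          refine Finset.sum_le_sum_of_subset_of_nonneg (Finset.range_subset_range.2 (by omega))
            fun k _ _ => by positivity
        refine le_trans h3 ?_
        rw [add_comm (1 : ℝ) y, add_pow]
        refine le_of_eq (Finset.sum_congr rfl fun k _ => ?_)
        rw [one_pow]
        ring
      have hexp : (1 + y) ^ n ≤ Real.exp d := by
        calc (1 + y) ^ n ≤ (Real.exp y) ^ n := by
              refine pow_le_pow_left₀ (by linarith) ?_ n
              have := Real.add_one_le_exp y
              linarith
          _ = Real.exp ((n : ℝ) * y) := by rw [← Real.exp_nat_mul]
          _ = Real.exp d := by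
              congr 1
              rw [hy]
              field_simp
      have hmax : max ((n : ℝ) / (d : ℝ)) 1 = (n : ℝ) / (d : ℝ) := by
        refine max_eq_left ?_
        rw [le_div_iff₀ hdR, one_mul]
        exact_mod_cast le_of_lt hdn
      rw [hmax]
      have hyd : (0 : ℝ) < y ^ d := by positivity
      rw [← mul_le_mul_iff_of_pos_right hyd]
      calc ((∑ k ∈ Finset.range (d + 1), n.choose k : ℕ) : ℝ) * y ^ d
          ≤ (1 + y) ^ n := hkey
        _ ≤ Real.exp d := hexp
        _ = Real.exp d * (((n : ℝ) / (d : ℝ)) ^ d * y ^ d) := by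
            rw [← mul_pow]
            have : (n : ℝ) / (d : ℝ) * y = 1 := by
              rw [hy]
              field_simp
            rw [this, one_pow, mul_one]
        _ = Real.exp d * ((n : ℝ) / (d : ℝ)) ^ d * y ^ d := by ring
  refine le_trans step1 ?_
  have hclog1 : (1 : ℝ) ≤ clog ((n : ℝ) / (d : ℝ)) := agn_one_le_clog _
  calc Real.exp d * (max ((n : ℝ) / (d : ℝ)) 1) ^ d
      ≤ Real.exp d * (Real.exp (clog ((n : ℝ) / (d : ℝ)))) ^ d := by
        refine mul_le_mul_of_nonneg_left ?_ (Real.exp_nonneg _)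
        refine pow_le_pow_left₀ (le_trans zero_le_one (le_max_right _ _)) (agn_exp_clog _) d
    _ = Real.exp ((d : ℝ) + (d : ℝ) * clog ((n : ℝ) / (d : ℝ))) := by
        rw [← Real.exp_nat_mul, ← Real.exp_add]
    _ ≤ Real.exp (2 * (d : ℝ) * clog ((n : ℝ) / (d : ℝ))) := by
        refine Real.exp_le_exp.2 ?_
        have hd0 : (0 : ℝ) ≤ (d : ℝ) := le_of_lt hdR
        nlinarith

section Trans
variable {X : Type*} (η : X → ℝ) {n m : ℕ} (x : Fin n → X) (π : Equiv.Perm (Fin n))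
  (c c' b b' : Fin n → Bool)

lemma agn_semiErr_full (hb : ∀ i, b i = c (π i)) :
    semiErrFin η (x ∘ ⇑π) n b - semiErrBayesFin η (x ∘ ⇑π) n
      = (1 / (n : ℝ)) * ∑ j, ((1 - condProb η (x j) (c j)) - min (η (x j)) (1 - η (x j))) := by
  rw [semiErrFin, semiErrBayesFin, ← mul_sub, ← Finset.sum_sub_distrib]
  congr 1
  rw [← Equiv.sum_comp π (fun j => (1 - condProb η (x j) (c j)) - min (η (x j)) (1 - η (x j)))]
  refine Finset.sum_congr rfl fun i _ => ?_
  rw [if_pos i.isLt, if_pos i.isLt, hb i]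
  rfl

lemma agn_semiErr_pref (hb : ∀ i, b i = c (π i)) :
    semiErrFin η (x ∘ ⇑π) m b - semiErrBayesFin η (x ∘ ⇑π) m
      = (1 / (m : ℝ)) * ∑ j ∈ ((univ : Finset (Fin n)).filter (fun i : Fin n => (i : ℕ) < m)).image ⇑π,
          ((1 - condProb η (x j) (c j)) - min (η (x j)) (1 - η (x j))) := by
  classical
  rw [semiErrFin, semiErrBayesFin, ← mul_sub, ← Finset.sum_sub_distrib]
  congr 1
  rw [Finset.sum_image (fun a _ b _ h => π.injective h), Finset.sum_filter]
  refine Finset.sum_congr rfl fun i _ => ?_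
  split_ifs with h
  · rw [hb i]
    rfl
  · ring

lemma agn_dist_full (hb : ∀ i, b i = c (π i)) (hb' : ∀ i, b' i = c' (π i)) :
    distFin n b b'
      = (1 / (n : ℝ)) * ∑ j, (if c j = c' j then (0 : ℝ) else 1) := by
  rw [distFin]
  congr 1
  rw [← Equiv.sum_comp π (fun j => if c j = c' j then (0 : ℝ) else 1)]
  refine Finset.sum_congr rfl fun i _ => ?_
  rw [hb i, hb' i]
  by_cases h : c (π i) = c' (π i)
  · rw [if_pos h, if_neg (by simp [h])]
  · rw [if_neg h, if_pos ⟨i.isLt, h⟩]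

lemma agn_dist_pref (hb : ∀ i, b i = c (π i)) (hb' : ∀ i, b' i = c' (π i)) :
    distFin m b b'
      = (1 / (m : ℝ)) * ∑ j ∈ ((univ : Finset (Fin n)).filter (fun i : Fin n => (i : ℕ) < m)).image ⇑π,
          (if c j = c' j then (0 : ℝ) else 1) := by
  classical
  rw [distFin]
  congr 1
  rw [Finset.sum_image (fun a _ b _ h => π.injective h), Finset.sum_filter]
  refine Finset.sum_congr rfl fun i _ => ?_
  rw [hb i, hb' i]
  by_cases hm : (i : ℕ) < m
  · by_cases h : c (π i) = c' (π i)
    · rw [if_neg (by simp [hm, h]), if_pos hm, if_pos h]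
    · rw [if_pos ⟨hm, h⟩, if_pos hm, if_neg h]
  · rw [if_neg (by simp [hm]), if_neg hm]

end Trans

lemma agn_final {α : Type*} [Fintype α] (p : α → Prop) [DecidablePred p] (δ : ℝ)
    (hpos : 0 < Fintype.card α)
    (hbad : (((univ : Finset α).filter (fun a => ¬ p a)).card : ℝ) ≤ δ * (Fintype.card α)) :
    (1 - δ : ℝ) ≤ (Fintype.card α : ℝ)⁻¹ * ∑ a, if p a then (1 : ℝ) else 0 := by
  have hsplit := Finset.card_filter_add_card_filter_not (s := (univ : Finset α)) (p := p)
  rw [Finset.card_univ] at hsplit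
  have hsum : ∑ a, (if p a then (1 : ℝ) else 0) = (((univ : Finset α).filter p).card : ℝ) := by
    rw [Finset.sum_boole]
  rw [hsum]
  have hcpos : (0 : ℝ) < (Fintype.card α : ℝ) := by exact_mod_cast hpos
  have hgood : (Fintype.card α : ℝ) - (((univ : Finset α).filter (fun a => ¬ p a)).card : ℝ)
      = (((univ : Finset α).filter p).card : ℝ) := by
    have := congrArg (Nat.cast : ℕ → ℝ) hsplit
    push_cast at this
    linarith
  rw [inv_mul_eq_div, le_div_iff₀ hcpos]
  nlinarith [hbad, hgood]

end AgnAux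

/-- Lemma 8.8: multiplicative Chernoff-type relations between the prefix and
full-sample semi-empirical excess errors and disagreements, conditionally on the unordered
multiset of instances (i.e., averaged over a uniformly random ordering). -/
theorem transductive_multiplicative_chernoff
    {X : Type*} [TopologicalSpace X] [PolishSpace X] [MeasurableSpace X] [BorelSpace X]
    (G : Set (X → Option Bool)) (hG : PUnivMeasurable G)
    (d : ℕ) (hd : 1 ≤ d) (hsh : PShatters G d) (hnsh : ¬ PShatters G (d + 1))
    (P : Measure (X × Bool)) [IsProbabilityMeasure P]
    (η : X → ℝ) (hη : IsCondDist P η) (hbr : BayesRealizable G P η)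
    (n m : ℕ) (hm : 1 ≤ m) (hmn : m ≤ n) (δ : ℝ) (hδ0 : 0 < δ) (hδ1 : δ < 1) :
    ∀ᵐ x ∂ (Measure.pi fun _ : Fin n => marginalX P),
      (1 - δ : ℝ) ≤ (Fintype.card (Equiv.Perm (Fin n)) : ℝ)⁻¹ *
        ∑ π : Equiv.Perm (Fin n),
          if
            (∀ g ∈ pproj G (x ∘ π),
              (semiErrFin η (x ∘ π) n g - semiErrBayesFin η (x ∘ π) n ≤
                2 * (semiErrFin η (x ∘ π) m g - semiErrBayesFin η (x ∘ π) m) +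
                  (24 / (m : ℝ)) * ((d : ℝ) * clog ((n : ℝ) / (d : ℝ)) + clog (1 / δ))) ∧
              (semiErrFin η (x ∘ π) m g - semiErrBayesFin η (x ∘ π) m ≤
                2 * (semiErrFin η (x ∘ π) n g - semiErrBayesFin η (x ∘ π) n) +
                  (24 / (m : ℝ)) * ((d : ℝ) * clog ((n : ℝ) / (d : ℝ)) + clog (1 / δ)))) ∧
            (∀ f ∈ pproj G (x ∘ π), ∀ g ∈ pproj G (x ∘ π),
              (distFin n f g ≤ 2 * distFin m f g +
                  (24 / (m : ℝ)) * ((d : ℝ) * clog ((n : ℝ) / (d : ℝ)) + clog (1 / δ))) ∧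
              (distFin m f g ≤ 2 * distFin n f g +
                  (24 / (m : ℝ)) * ((d : ℝ) * clog ((n : ℝ) / (d : ℝ)) + clog (1 / δ))))
          then (1 : ℝ) else 0 := by
  classical
  have hn : 1 ≤ n := le_trans hm hmn
  have hnR : (0 : ℝ) < (n : ℝ) := by exact_mod_cast hn
  have hmR : (0 : ℝ) < (m : ℝ) := by exact_mod_cast hm
  have hdR : (0 : ℝ) < (d : ℝ) := by exact_mod_cast hd
  refine MeasureTheory.ae_of_all _ (fun x => ?_)
  set L : ℝ := (d : ℝ) * clog ((n : ℝ) / (d : ℝ)) + clog (1 / δ) with hLdef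
  set K : ℝ := 24 * L with hKdef
  have hC1 : 1 ≤ clog ((n : ℝ) / (d : ℝ)) := agn_one_le_clog _
  have hC'1 : 1 ≤ clog (1 / δ) := agn_one_le_clog _
  have hL0 : (0 : ℝ) ≤ L := by rw [hLdef]; nlinarith
  have hK0 : (0 : ℝ) ≤ K := by rw [hKdef]; linarith
  have hKm : (24 / (m : ℝ)) * L = K / (m : ℝ) := by rw [hKdef]; ring
  rw [hKm]
  -- the realizable labelings of the sample
  set H : Finset (Fin n → Bool) := (Set.toFinite (pproj G x)).toFinset with hHdef
  have hHmem : ∀ c, c ∈ H ↔ c ∈ pproj G x := fun c => Set.Finite.mem_toFinset _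
  -- excess-error weights and disagreement weights
  set w : (Fin n → Bool) → Fin n → ℝ :=
    fun c j => (1 - condProb η (x j) (c j)) - min (η (x j)) (1 - η (x j)) with hwdef
  set u : (Fin n → Bool) → (Fin n → Bool) → Fin n → ℝ :=
    fun c c' j => if c j = c' j then (0 : ℝ) else 1 with hudef
  have hwb : ∀ c j, 0 ≤ w c j ∧ w c j ≤ 1 := by
    intro c j
    obtain ⟨h0, h1⟩ := hη.2.1 (x j)
    have hmin0 : 0 ≤ min (η (x j)) (1 - η (x j)) := le_min h0 (by linarith)
    have hw' : w c j = (1 - condProb η (x j) (c j)) - min (η (x j)) (1 - η (x j)) := rfl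
    rw [hw', condProb]
    cases hcj : c j
    · simp only [Bool.false_eq_true, if_false]
      constructor
      · have := min_le_left (η (x j)) (1 - η (x j))
        linarith
      · linarith
    · simp only [if_true]
      constructor
      · have := min_le_right (η (x j)) (1 - η (x j))
        linarith
      · linarith
  have hub : ∀ c c' j, 0 ≤ u c c' j ∧ u c c' j ≤ 1 := by
    intro c c' j
    have hu' : u c c' j = if c j = c' j then (0 : ℝ) else 1 := rfl
    rw [hu']
    split_ifs <;> norm_num
  -- bad predicate on subsets
  set qb : (Fin n → ℝ) → Finset (Fin n) → Prop := fun v A =>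
    ¬ ((1 / (n : ℝ)) * ∑ j, v j ≤ 2 * ((1 / (m : ℝ)) * ∑ j ∈ A, v j) + K / (m : ℝ) ∧
       (1 / (m : ℝ)) * ∑ j ∈ A, v j ≤ 2 * ((1 / (n : ℝ)) * ∑ j, v j) + K / (m : ℝ)) with hqbdef
  set E : ℝ := 2 * Real.exp (-(Real.log 2 / 2) * K) with hEdef
  have hE0 : (0 : ℝ) ≤ E := by rw [hEdef]; positivity
  have hBadW : ∀ v : Fin n → ℝ, (∀ j, 0 ≤ v j ∧ v j ≤ 1) →
      (((Finset.univ : Finset (Equiv.Perm (Fin n))).filter (fun π : Equiv.Perm (Fin n) =>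
          qb v (((Finset.univ : Finset (Fin n)).filter
            (fun i : Fin n => (i : ℕ) < m)).image ⇑π))).card : ℝ)
        ≤ E * (Nat.factorial n) := by
    intro v hv
    refine agn_perm_count hm hmn (qb v) E hE0 ?_
    rw [hEdef]
    exact agn_badW_count n m hm hmn v hv K hK0
  set U1 : Finset (Equiv.Perm (Fin n)) := H.biUnion (fun c =>
    (Finset.univ : Finset (Equiv.Perm (Fin n))).filter (fun π : Equiv.Perm (Fin n) =>
      qb (w c) (((Finset.univ : Finset (Fin n)).filter
        (fun i : Fin n => (i : ℕ) < m)).image ⇑π))) with hU1def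
  set U2 : Finset (Equiv.Perm (Fin n)) := (H ×ˢ H).biUnion (fun p =>
    (Finset.univ : Finset (Equiv.Perm (Fin n))).filter (fun π : Equiv.Perm (Fin n) =>
      qb (u p.1 p.2) (((Finset.univ : Finset (Fin n)).filter
        (fun i : Fin n => (i : ℕ) < m)).image ⇑π))) with hU2def
  -- the crucial implication: permutations outside `U1 ∪ U2` are good
  have hImp : ∀ π : Equiv.Perm (Fin n), π ∉ U1 ∪ U2 →
      ((∀ g ∈ pproj G (x ∘ π),
        (semiErrFin η (x ∘ π) n g - semiErrBayesFin η (x ∘ π) n ≤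
          2 * (semiErrFin η (x ∘ π) m g - semiErrBayesFin η (x ∘ π) m) + K / (m : ℝ)) ∧
        (semiErrFin η (x ∘ π) m g - semiErrBayesFin η (x ∘ π) m ≤
          2 * (semiErrFin η (x ∘ π) n g - semiErrBayesFin η (x ∘ π) n) + K / (m : ℝ))) ∧
      (∀ f ∈ pproj G (x ∘ π), ∀ g ∈ pproj G (x ∘ π),
        (distFin n f g ≤ 2 * distFin m f g + K / (m : ℝ)) ∧
        (distFin m f g ≤ 2 * distFin n f g + K / (m : ℝ)))) := by
    intro π hnot
    rw [Finset.mem_union, not_or, hU1def, hU2def, Finset.mem_biUnion, Finset.mem_biUnion] at hnot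
    push_neg at hnot
    obtain ⟨h1, h2⟩ := hnot
    constructor
    · intro g hg
      obtain ⟨g', hg'G, hg'⟩ := hg
      have hcg : (fun j => g (π.symm j)) ∈ pproj G x := by
        refine ⟨g', hg'G, fun j => ?_⟩
        have := hg' (π.symm j)
        simpa using this
      have hgc : ∀ i, g i = (fun j => g (π.symm j)) (π i) := by
        intro i
        simp
      have hq := h1 _ ((hHmem _).2 hcg)
      rw [Finset.mem_filter] at hq
      push_neg at hq
      have hq' := hq (Finset.mem_univ π)
      rw [agn_semiErr_full η x π (fun j => g (π.symm j)) g hgc,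
        agn_semiErr_pref η x π (fun j => g (π.symm j)) g hgc]
      exact hq'
    · intro f hf g hg
      obtain ⟨f', hf'G, hf'⟩ := hf
      obtain ⟨g', hg'G, hg'⟩ := hg
      have hcf : (fun j => f (π.symm j)) ∈ pproj G x := by
        refine ⟨f', hf'G, fun j => ?_⟩
        have := hf' (π.symm j)
        simpa using this
      have hcg : (fun j => g (π.symm j)) ∈ pproj G x := by
        refine ⟨g', hg'G, fun j => ?_⟩
        have := hg' (π.symm j)
        simpa using this
      have hfc : ∀ i, f i = (fun j => f (π.symm j)) (π i) := by
        intro i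
        simp
      have hgc : ∀ i, g i = (fun j => g (π.symm j)) (π i) := by
        intro i
        simp
      have hqmem : ((fun j => f (π.symm j)), (fun j => g (π.symm j))) ∈ H ×ˢ H :=
        Finset.mem_product.2 ⟨(hHmem _).2 hcf, (hHmem _).2 hcg⟩
      have hq := h2 _ hqmem
      rw [Finset.mem_filter] at hq
      push_neg at hq
      have hq' := hq (Finset.mem_univ π)
      rw [agn_dist_full π (fun j => f (π.symm j)) (fun j => g (π.symm j)) f g hfc hgc,
        agn_dist_pref π (fun j => f (π.symm j)) (fun j => g (π.symm j)) f g hfc hgc]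
      exact hq'
  -- final numeric bound
  have hnum : ((H.card : ℝ) + (H.card : ℝ) * (H.card : ℝ)) * E ≤ δ := by
    rcases Nat.eq_zero_or_pos H.card with hN0 | hN1
    · rw [hN0]
      norm_num
      linarith
    · have hN1R : (1 : ℝ) ≤ (H.card : ℝ) := by exact_mod_cast hN1
      have hNsauer : (H.card : ℝ) ≤ Real.exp (2 * (d : ℝ) * clog ((n : ℝ) / (d : ℝ))) := by
        have h1 := agn_card_le_sauer G d n hnsh x H hHmem
        have h2 := agn_sum_choose_le d n hd hn
        calc (H.card : ℝ) ≤ ((∑ k ∈ Finset.range (d + 1), n.choose k : ℕ) : ℝ) := by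
              exact_mod_cast h1
          _ ≤ Real.exp (2 * (d : ℝ) * clog ((n : ℝ) / (d : ℝ))) := h2
      set NB : ℝ := Real.exp (2 * (d : ℝ) * clog ((n : ℝ) / (d : ℝ))) with hNB
      have hNB1 : (1 : ℝ) ≤ NB := by
        rw [hNB]
        refine Real.one_le_exp ?_
        nlinarith
      have hstep : ((H.card : ℝ) + (H.card : ℝ) * (H.card : ℝ)) * E ≤ 2 * NB ^ 2 * E := by
        refine mul_le_mul_of_nonneg_right ?_ hE0
        nlinarith
      refine le_trans hstep ?_
      have hlog2 : (0.6931471803 : ℝ) < Real.log 2 := Real.log_two_gt_d9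
      have h4exp : (4 : ℝ) ≤ Real.exp 2 := by
        have h2e : (2 : ℝ) ≤ Real.exp 1 := by
          have := Real.add_one_le_exp 1
          linarith
        calc (4 : ℝ) = 2 * 2 := by norm_num
          _ ≤ Real.exp 1 * Real.exp 1 := by nlinarith
          _ = Real.exp 2 := by rw [← Real.exp_add]; norm_num
      have hlogδ : Real.log (1 / δ) ≤ clog (1 / δ) := by
        rw [clog]
        exact Real.log_le_log (by positivity) (le_max_left _ _)
      have hexpineq : 2 + 2 * (2 * (d : ℝ) * clog ((n : ℝ) / (d : ℝ))) + -(Real.log 2 / 2) * K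
          ≤ Real.log δ := by
        have hlogδ' : Real.log δ = - Real.log (1 / δ) := by
          rw [one_div, Real.log_inv, neg_neg]
        rw [hlogδ', hKdef, hLdef]
        have hd1 : (1 : ℝ) ≤ (d : ℝ) := by exact_mod_cast hd
        have hdC : (1 : ℝ) ≤ (d : ℝ) * clog ((n : ℝ) / (d : ℝ)) := by nlinarith
        nlinarith [hlogδ, hC'1, hlog2, hdC]
      calc 2 * NB ^ 2 * E = 4 * (NB ^ 2 * Real.exp (-(Real.log 2 / 2) * K)) := by
            rw [hEdef]; ring
        _ ≤ Real.exp 2 * (NB ^ 2 * Real.exp (-(Real.log 2 / 2) * K)) := by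
            refine mul_le_mul_of_nonneg_right h4exp (by positivity)
        _ = Real.exp (2 + 2 * (2 * (d : ℝ) * clog ((n : ℝ) / (d : ℝ))) + -(Real.log 2 / 2) * K) := by
            have hsq : NB ^ 2 = Real.exp (2 * (d : ℝ) * clog ((n : ℝ) / (d : ℝ))
                + 2 * (d : ℝ) * clog ((n : ℝ) / (d : ℝ))) := by
              rw [hNB, pow_two, ← Real.exp_add]
            rw [hsq, ← Real.exp_add, ← Real.exp_add]
            congr 1
            ring
        _ ≤ Real.exp (Real.log δ) := Real.exp_le_exp.2 hexpineq
        _ = δ := Real.exp_log hδ0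
  -- conclude via the abstract counting lemma
  refine agn_final _ δ ?_ ?_
  · rw [Fintype.card_perm]
    exact Nat.factorial_pos _
  have hcardPerm : Fintype.card (Equiv.Perm (Fin n)) = Nat.factorial n := by
    rw [Fintype.card_perm, Fintype.card_fin]
  rw [hcardPerm]
  have hstep2 := Finset.card_union_le U1 U2
  have hstep3 : U1.card ≤ ∑ c ∈ H, (((Finset.univ : Finset (Equiv.Perm (Fin n))).filter
      (fun π : Equiv.Perm (Fin n) => qb (w c) (((Finset.univ : Finset (Fin n)).filter
        (fun i : Fin n => (i : ℕ) < m)).image ⇑π))).card) := by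
    rw [hU1def]
    exact Finset.card_biUnion_le
  have hstep4 : U2.card ≤ ∑ p ∈ H ×ˢ H, (((Finset.univ : Finset (Equiv.Perm (Fin n))).filter
      (fun π : Equiv.Perm (Fin n) => qb (u p.1 p.2) (((Finset.univ : Finset (Fin n)).filter
        (fun i : Fin n => (i : ℕ) < m)).image ⇑π))).card) := by
    rw [hU2def]
    exact Finset.card_biUnion_le
  have hsum1 : ((∑ c ∈ H, (((Finset.univ : Finset (Equiv.Perm (Fin n))).filter
      (fun π : Equiv.Perm (Fin n) => qb (w c) (((Finset.univ : Finset (Fin n)).filter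
        (fun i : Fin n => (i : ℕ) < m)).image ⇑π))).card) : ℕ) : ℝ)
      ≤ (H.card : ℝ) * (E * (Nat.factorial n)) := by
    rw [Nat.cast_sum]
    calc ∑ c ∈ H, ((((Finset.univ : Finset (Equiv.Perm (Fin n))).filter
          (fun π : Equiv.Perm (Fin n) => qb (w c) (((Finset.univ : Finset (Fin n)).filter
            (fun i : Fin n => (i : ℕ) < m)).image ⇑π))).card : ℝ))
        ≤ ∑ _c ∈ H, E * (Nat.factorial n) :=
          Finset.sum_le_sum fun c _ => hBadW (w c) (hwb c)
      _ = (H.card : ℝ) * (E * (Nat.factorial n)) := by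
          rw [Finset.sum_const, nsmul_eq_mul]
  have hsum2 : ((∑ p ∈ H ×ˢ H, (((Finset.univ : Finset (Equiv.Perm (Fin n))).filter
      (fun π : Equiv.Perm (Fin n) => qb (u p.1 p.2) (((Finset.univ : Finset (Fin n)).filter
        (fun i : Fin n => (i : ℕ) < m)).image ⇑π))).card) : ℕ) : ℝ)
      ≤ (H.card : ℝ) * (H.card : ℝ) * (E * (Nat.factorial n)) := by
    rw [Nat.cast_sum]
    calc ∑ p ∈ H ×ˢ H, ((((Finset.univ : Finset (Equiv.Perm (Fin n))).filter
          (fun π : Equiv.Perm (Fin n) => qb (u p.1 p.2) (((Finset.univ : Finset (Fin n)).filter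
            (fun i : Fin n => (i : ℕ) < m)).image ⇑π))).card : ℝ))
        ≤ ∑ _p ∈ H ×ˢ H, E * (Nat.factorial n) :=
          Finset.sum_le_sum fun p _ => hBadW (u p.1 p.2) (hub p.1 p.2)
      _ = ((H ×ˢ H).card : ℝ) * (E * (Nat.factorial n)) := by
          rw [Finset.sum_const, nsmul_eq_mul]
      _ = (H.card : ℝ) * (H.card : ℝ) * (E * (Nat.factorial n)) := by
          rw [Finset.card_product]
          push_cast
          ring
  refine le_trans ((Nat.cast_le (α := ℝ)).2 (le_trans (Finset.card_le_card ?_) hstep2)) ?_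
  · intro π hπ
    rw [Finset.mem_filter] at hπ
    by_contra hc
    exact hπ.2 (hImp π hc)
  · rw [Nat.cast_add]
    have hfin := add_le_add (le_trans ((Nat.cast_le (α := ℝ)).2 hstep3) hsum1)
      (le_trans ((Nat.cast_le (α := ℝ)).2 hstep4) hsum2)
    refine le_trans hfin ?_
    calc (H.card : ℝ) * (E * (Nat.factorial n)) +
          (H.card : ℝ) * (H.card : ℝ) * (E * (Nat.factorial n))
        = (((H.card : ℝ) + (H.card : ℝ) * (H.card : ℝ)) * E) * (Nat.factorial n) := by ring
      _ ≤ δ * (Nat.factorial n) := mul_le_mul_of_nonneg_right hnum (by positivity)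


end Agn
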